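/- Let φ be a nondegenerate Bernstein function with extension φ(z) to Re z ≥ 0. Then for every b > 0 and u > 0: φ(b u) ≤ |φ(b u + i b)| ≤ √(1 + 1/u²) · φ(b u). Consequently, for every a ≥ 0 and b > 0, the quantity Θ_φ(a,b) = ∫_{a/b}^∞ log( |φ(b u + i b)| / φ(b u) ) du satisfies 0 ≤ Θ_φ(a,b) ≤ π/2. (Paper: Proposition 'prop:asymt_bound_Olver1', item 1, with inequalities (6.x) |φ(a+ib)| ≥ φ(a) and (eq:PhiEst).) -/

import Mathlib

open MeasureTheory

/-- The quantity `Θ_φ(a,b) = ∫_{a/b}^∞ log(|φ(bu + ib)|/φ(bu)) du`. -/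
noncomputable def Theta (φC : ℂ → ℂ) (a b : ℝ) : ℝ :=
  ∫ u in Set.Ioi (a / b),
    Real.log (‖φC (((b * u : ℝ) : ℂ) + (b : ℂ) * Complex.I)‖ / (φC ((b * u : ℝ) : ℂ)).re)

section Aux

open Complex Set Filter Topology

lemma BernAux.one_sub_exp_le {x : ℝ} (hx : 0 ≤ x) : 1 - Real.exp (-x) ≤ x := by
  nlinarith [Real.add_one_le_exp (-x)]

lemma BernAux.real_exp_integral {c : ℝ} (hc : c ≠ 0) :
    ∫ t in (0:ℝ)..1, Real.exp (c * t) = (Real.exp c - 1) / c := by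
  rw [intervalIntegral.integral_comp_mul_left (fun x => Real.exp x) hc]
  simp [smul_eq_mul]
  field_simp

lemma BernAux.norm_one_sub_exp_le {w : ℂ} (hw : 0 < w.re) :
    ‖1 - Complex.exp (-w)‖ ≤ ‖w‖ / w.re * (1 - Real.exp (-w.re)) := by
  have hw0 : w ≠ 0 := fun h => by simp [h] at hw
  have key : 1 - Complex.exp (-w) = w * ∫ t in (0:ℝ)..1, Complex.exp (-w * t) := by
    have h := integral_exp_mul_complex (a := (0:ℝ)) (b := 1) (c := -w) (neg_ne_zero.2 hw0)
    simp only [Complex.ofReal_one, Complex.ofReal_zero, mul_one, mul_zero, Complex.exp_zero] at h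
    rw [h, div_neg, mul_neg, mul_div_assoc', mul_comm, mul_div_assoc, div_self hw0, mul_one]
    ring
  have hnorm : ∀ t : ℝ, ‖Complex.exp (-w * t)‖ = Real.exp (-w.re * t) := by
    intro t
    rw [Complex.norm_exp]
    norm_num
  have hint : ∫ t in (0:ℝ)..1, Real.exp (-w.re * t) = (1 - Real.exp (-w.re)) / w.re := by
    rw [BernAux.real_exp_integral (by linarith : -w.re ≠ 0)]
    rw [div_eq_div_iff (by linarith) (ne_of_gt hw)]
    ring
  calc ‖1 - Complex.exp (-w)‖ = ‖w‖ * ‖∫ t in (0:ℝ)..1, Complex.exp (-w * t)‖ := by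
        rw [key, norm_mul]
    _ ≤ ‖w‖ * ∫ t in (0:ℝ)..1, ‖Complex.exp (-w * t)‖ := by
        gcongr
        refine intervalIntegral.norm_integral_le_abs_integral_norm.trans (le_of_eq ?_)
        exact _root_.abs_of_nonneg (intervalIntegral.integral_nonneg zero_le_one
            (fun t _ => norm_nonneg _))
    _ = ‖w‖ * ((1 - Real.exp (-w.re)) / w.re) := by
        simp_rw [hnorm]; rw [hint]
    _ = ‖w‖ / w.re * (1 - Real.exp (-w.re)) := by ring

lemma BernAux.ae_pos {μ : Measure ℝ} (hμ0 : μ (Set.Iic 0) = 0) : ∀ᵐ y ∂μ, 0 < y := by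
  rw [MeasureTheory.ae_iff]
  convert hμ0 using 2
  ext y
  simp [Set.mem_Iic]

lemma BernAux.bound_pt {z : ℂ} (hz : 0 < z.re) {y : ℝ} (hy : 0 < y) :
    ‖1 - Complex.exp (-(z * y))‖ ≤ (2 + ‖z‖) * min 1 y := by
  have hre : (z * (y:ℂ)).re = z.re * y := by simp [Complex.mul_re]
  have hwre : 0 < (z * (y:ℂ)).re := by rw [hre]; positivity
  have b2 : ‖1 - Complex.exp (-(z * y))‖ ≤ ‖z‖ * y := by
    refine (BernAux.norm_one_sub_exp_le hwre).trans ?_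
    rw [hre]
    calc ‖z * (y:ℂ)‖ / (z.re * y) * (1 - Real.exp (-(z.re * y)))
        ≤ ‖z * (y:ℂ)‖ / (z.re * y) * (z.re * y) :=
          mul_le_mul_of_nonneg_left (BernAux.one_sub_exp_le (by positivity)) (by positivity)
      _ = ‖z * (y:ℂ)‖ := by field_simp
      _ = ‖z‖ * y := by
          rw [norm_mul, Complex.norm_real, Real.norm_of_nonneg hy.le]
  have b1 : ‖1 - Complex.exp (-(z * y))‖ ≤ 2 := by
    calc ‖1 - Complex.exp (-(z * y))‖ ≤ ‖(1:ℂ)‖ + ‖Complex.exp (-(z * y))‖ := norm_sub_le _ _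
      _ = 1 + Real.exp (-(z.re * y)) := by
          rw [norm_one, Complex.norm_exp]
          congr 2
          simp [Complex.mul_re]
      _ ≤ 2 := by
          have : Real.exp (-(z.re * y)) ≤ 1 :=
            Real.exp_le_one_iff.2 (neg_nonpos.2 (by positivity))
          linarith
  rcases le_total y 1 with h | h
  · rw [min_eq_right h]
    calc ‖1 - Complex.exp (-(z * y))‖ ≤ ‖z‖ * y := b2
      _ ≤ (2 + ‖z‖) * y := by nlinarith [norm_nonneg z]
  · rw [min_eq_left h]
    calc ‖1 - Complex.exp (-(z * y))‖ ≤ 2 := b1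
      _ ≤ (2 + ‖z‖) * 1 := by nlinarith [norm_nonneg z]

lemma BernAux.int_one_sub_exp {μ : Measure ℝ} (hμ0 : μ (Set.Iic 0) = 0)
    (hμint : Integrable (fun y : ℝ => min 1 y) μ) {z : ℂ} (hz : 0 < z.re) :
    Integrable (fun y : ℝ => 1 - Complex.exp (-(z * y))) μ := by
  apply Integrable.mono' (hμint.const_mul (2 + ‖z‖))
  · exact (Continuous.aestronglyMeasurable (by fun_prop))
  · filter_upwards [BernAux.ae_pos hμ0] with y hy
    exact BernAux.bound_pt hz hy

lemma BernAux.int_one_sub_exp_real {μ : Measure ℝ} (hμ0 : μ (Set.Iic 0) = 0)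
    (hμint : Integrable (fun y : ℝ => min 1 y) μ) {x : ℝ} (hx : 0 < x) :
    Integrable (fun y : ℝ => 1 - Real.exp (-(x * y))) μ := by
  have h := (BernAux.int_one_sub_exp hμ0 hμint (z := (x:ℂ)) (by simpa using hx)).re
  apply h.congr
  filter_upwards with y
  simp only [RCLike.re_to_complex]
  rw [show -((x:ℂ) * y) = ((-(x*y):ℝ):ℂ) by push_cast; ring]
  rw [Complex.sub_re, Complex.one_re, Complex.exp_ofReal_re]

lemma BernAux.re_pt (z : ℂ) (y : ℝ) :
    (1 - Complex.exp (-(z * y))).re = 1 - Real.exp (-(z.re * y)) * Real.cos (z.im * y) := by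
  have h1 : (z * (y:ℂ)).re = z.re * y := by simp [Complex.mul_re]
  have h2 : (z * (y:ℂ)).im = z.im * y := by simp [Complex.mul_im]
  rw [Complex.sub_re, Complex.one_re]
  congr 1
  rw [Complex.exp_re, Complex.neg_re, Complex.neg_im, h1, h2, Real.cos_neg]

lemma BernAux.re_repr (φC : ℂ → ℂ) (m σ2 : ℝ) (μ : Measure ℝ) (hμ0 : μ (Set.Iic 0) = 0)
    (hμint : Integrable (fun y : ℝ => min 1 y) μ)
    (hrepC : ∀ z : ℂ, 0 ≤ z.re →
      φC z = (m : ℂ) + (σ2 : ℂ) * z + ∫ y, (1 - Complex.exp (-(z * (y : ℂ)))) ∂μ)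
    {z : ℂ} (hz : 0 < z.re) :
    (φC z).re = m + σ2 * z.re + ∫ y, (1 - Real.exp (-(z.re * y)) * Real.cos (z.im * y)) ∂μ := by
  rw [hrepC _ hz.le]
  rw [Complex.add_re, Complex.add_re, Complex.ofReal_re]
  congr 1
  · congr 1
    simp [Complex.mul_re]
  · have h := integral_re (μ := μ) (BernAux.int_one_sub_exp hμ0 hμint hz)
    simp only [RCLike.re_to_complex] at h
    rw [← h]
    congr 1
    funext y
    exact BernAux.re_pt z y

lemma BernAux.re_pos (φC : ℂ → ℂ) (m σ2 : ℝ) (μ : Measure ℝ)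
    (hm : 0 ≤ m) (hσ : 0 ≤ σ2) (hμ0 : μ (Set.Iic 0) = 0)
    (hμint : Integrable (fun y : ℝ => min 1 y) μ)
    (hrepC : ∀ z : ℂ, 0 ≤ z.re →
      φC z = (m : ℂ) + (σ2 : ℂ) * z + ∫ y, (1 - Complex.exp (-(z * (y : ℂ)))) ∂μ)
    (hnd : ¬ (m = 0 ∧ σ2 = 0 ∧ μ = 0)) {x : ℝ} (hx : 0 < x) :
    0 < (φC (x:ℂ)).re := by
  have hz : (0:ℝ) < ((x:ℂ)).re := by simpa using hx
  rw [BernAux.re_repr φC m σ2 μ hμ0 hμint hrepC hz]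
  simp only [Complex.ofReal_re, Complex.ofReal_im, zero_mul, Real.cos_zero, mul_one]
  set I := ∫ y, (1 - Real.exp (-(x * y))) ∂μ with hI
  have hint : Integrable (fun y : ℝ => 1 - Real.exp (-(x * y))) μ :=
    BernAux.int_one_sub_exp_real hμ0 hμint hx
  have hnn : ∀ᵐ y ∂μ, 0 ≤ 1 - Real.exp (-(x * y)) := by
    filter_upwards [BernAux.ae_pos hμ0] with y hy
    have : Real.exp (-(x * y)) ≤ 1 := Real.exp_le_one_iff.2 (by nlinarith)
    linarith
  have hInn : 0 ≤ I := integral_nonneg_of_ae hnn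
  rcases lt_or_ge 0 m with h | h; · positivity
  have hm0 : m = 0 := le_antisymm h hm
  rcases lt_or_ge 0 σ2 with h2 | h2; · positivity
  have hσ0 : σ2 = 0 := le_antisymm h2 hσ
  rcases hInn.lt_or_eq with hI' | hI'
  · positivity
  · exfalso
    apply hnd
    refine ⟨hm0, hσ0, ?_⟩
    have hz0 : (fun y : ℝ => 1 - Real.exp (-(x * y))) =ᵐ[μ] 0 :=
      (integral_eq_zero_iff_of_nonneg_ae hnn hint).1 hI'.symm
    have : ∀ᵐ y ∂μ, False := by
      filter_upwards [hz0, BernAux.ae_pos hμ0] with y h0 hy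
      have : Real.exp (-(x * y)) = 1 := by
        have := h0; simp only [Pi.zero_apply] at this; linarith
      rw [Real.exp_eq_one_iff] at this
      nlinarith
    have huniv : μ Set.univ = 0 := by
      have := MeasureTheory.ae_iff.1 this
      simpa using this
    exact Measure.measure_univ_eq_zero.1 huniv

lemma BernAux.bern_lower (φC : ℂ → ℂ) (m σ2 : ℝ) (μ : Measure ℝ)
    (hm : 0 ≤ m) (hσ : 0 ≤ σ2) (hμ0 : μ (Set.Iic 0) = 0)
    (hμint : Integrable (fun y : ℝ => min 1 y) μ)
    (hrepC : ∀ z : ℂ, 0 ≤ z.re →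
      φC z = (m : ℂ) + (σ2 : ℂ) * z + ∫ y, (1 - Complex.exp (-(z * (y : ℂ)))) ∂μ)
    {z : ℂ} (hz : 0 < z.re) :
    (φC ((z.re:ℝ):ℂ)).re ≤ ‖φC z‖ := by
  have hx : (0:ℝ) < ((z.re:ℝ):ℂ).re := by simpa using hz
  have key : (φC ((z.re:ℝ):ℂ)).re ≤ (φC z).re := by
    rw [BernAux.re_repr φC m σ2 μ hμ0 hμint hrepC hx,
      BernAux.re_repr φC m σ2 μ hμ0 hμint hrepC hz]
    simp only [Complex.ofReal_re, Complex.ofReal_im, zero_mul, Real.cos_zero, mul_one]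
    have hmono : (∫ y, (1 - Real.exp (-(z.re * y))) ∂μ)
        ≤ ∫ y, (1 - Real.exp (-(z.re * y)) * Real.cos (z.im * y)) ∂μ := by
      apply integral_mono (BernAux.int_one_sub_exp_real hμ0 hμint hz)
      · have h := (BernAux.int_one_sub_exp hμ0 hμint hz).re
        apply h.congr
        filter_upwards with y
        exact BernAux.re_pt z y
      · intro y
        have := Real.cos_le_one (z.im * y)
        have := Real.exp_pos (-(z.re * y))
        simp only
        nlinarith
    linarith
  exact key.trans (Complex.re_le_norm _)

lemma BernAux.bern_upper (φC : ℂ → ℂ) (m σ2 : ℝ) (μ : Measure ℝ)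
    (hm : 0 ≤ m) (hσ : 0 ≤ σ2) (hμ0 : μ (Set.Iic 0) = 0)
    (hμint : Integrable (fun y : ℝ => min 1 y) μ)
    (hrepC : ∀ z : ℂ, 0 ≤ z.re →
      φC z = (m : ℂ) + (σ2 : ℂ) * z + ∫ y, (1 - Complex.exp (-(z * (y : ℂ)))) ∂μ)
    {z : ℂ} (hz : 0 < z.re) :
    ‖φC z‖ ≤ ‖z‖ / z.re * (φC ((z.re:ℝ):ℂ)).re := by
  have hx : (0:ℝ) < ((z.re:ℝ):ℂ).re := by simpa using hz
  have hratio : 1 ≤ ‖z‖ / z.re := by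
    rw [le_div_iff₀ hz, one_mul]
    calc z.re ≤ |z.re| := le_abs_self _
      _ ≤ ‖z‖ := Complex.abs_re_le_norm z
      _ = ‖z‖ := rfl
  have hzn : z.re ≤ ‖z‖ := by
    calc z.re ≤ |z.re| := le_abs_self _
      _ ≤ ‖z‖ := Complex.abs_re_le_norm z
      _ = ‖z‖ := rfl
  set S := ∫ y, (1 - Real.exp (-(z.re * y))) ∂μ with hS
  have hSint : Integrable (fun y : ℝ => 1 - Real.exp (-(z.re * y))) μ :=
    BernAux.int_one_sub_exp_real hμ0 hμint hz
  have hSnn : 0 ≤ S := by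
    apply integral_nonneg_of_ae
    filter_upwards [BernAux.ae_pos hμ0] with y hy
    have : Real.exp (-(z.re * y)) ≤ 1 := Real.exp_le_one_iff.2 (by nlinarith)
    simp only [Pi.zero_apply]
    linarith
  have hre : (φC ((z.re:ℝ):ℂ)).re = m + σ2 * z.re + S := by
    rw [BernAux.re_repr φC m σ2 μ hμ0 hμint hrepC hx]
    simp only [Complex.ofReal_re, Complex.ofReal_im, zero_mul, Real.cos_zero, mul_one, hS]
  have hnormint : ‖∫ y, (1 - Complex.exp (-(z * (y:ℂ)))) ∂μ‖ ≤ ‖z‖ / z.re * S := by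
    calc ‖∫ y, (1 - Complex.exp (-(z * (y:ℂ)))) ∂μ‖
        ≤ ∫ y, ‖1 - Complex.exp (-(z * (y:ℂ)))‖ ∂μ :=
          norm_integral_le_integral_norm _
      _ ≤ ∫ y, ‖z‖ / z.re * (1 - Real.exp (-(z.re * y))) ∂μ := by
          apply integral_mono_ae (BernAux.int_one_sub_exp hμ0 hμint hz).norm
            (hSint.const_mul _)
          filter_upwards [BernAux.ae_pos hμ0] with y hy
          have h := BernAux.norm_one_sub_exp_le (w := z * y) (by simp [Complex.mul_re]; nlinarith)
          have h1 : (z * (y:ℂ)).re = z.re * y := by simp [Complex.mul_re]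
          have h2 : ‖z * (y:ℂ)‖ = ‖z‖ * y := by
            rw [norm_mul, Complex.norm_real, Real.norm_of_nonneg hy.le]
          rw [h1, h2] at h
          calc ‖1 - Complex.exp (-(z * y))‖
              ≤ ‖z‖ * y / (z.re * y) * (1 - Real.exp (-(z.re * y))) := h
            _ = ‖z‖ / z.re * (1 - Real.exp (-(z.re * y))) := by
                rw [mul_div_mul_right _ _ (ne_of_gt hy)]
      _ = ‖z‖ / z.re * S := integral_const_mul _ _
  rw [hrepC z hz.le, hre]
  calc ‖(m:ℂ) + (σ2:ℂ) * z + ∫ y, (1 - Complex.exp (-(z * (y:ℂ)))) ∂μ‖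
      ≤ ‖(m:ℂ)‖ + ‖(σ2:ℂ) * z‖ + ‖∫ y, (1 - Complex.exp (-(z * (y:ℂ)))) ∂μ‖ :=
        norm_add₃_le
    _ ≤ m + σ2 * ‖z‖ + ‖z‖ / z.re * S := by
        have e1 : ‖((m:ℝ):ℂ)‖ = m := by rw [Complex.norm_real, Real.norm_of_nonneg hm]
        have e2 : ‖((σ2:ℝ):ℂ) * z‖ = σ2 * ‖z‖ := by
          rw [norm_mul, Complex.norm_real, Real.norm_of_nonneg hσ]
        rw [e1, e2]
        linarith [hnormint]
    _ ≤ ‖z‖ / z.re * (m + σ2 * z.re + S) := by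
        have e : σ2 * ‖z‖ = ‖z‖ / z.re * (σ2 * z.re) := by
          field_simp
        nlinarith [hratio, hSnn, hm, mul_le_mul_of_nonneg_right hratio hm]

noncomputable def BernAux.Ffn (u : ℝ) : ℝ :=
  u * Real.log (1 + 1/u^2) + 2 * Real.arctan u

namespace BernAux

lemma Ffn_deriv {u : ℝ} (hu : 0 < u) :
    HasDerivAt Ffn (Real.log (1 + 1/u^2)) u := by
  have hu2 : (u:ℝ)^2 ≠ 0 := by positivity
  have harg : (0:ℝ) < 1 + 1/u^2 := by positivity
  have h1 : HasDerivAt (fun v : ℝ => 1 + 1/v^2) (-(2*u)/(u^2)^2) u := by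
    have := ((hasDerivAt_pow 2 u).inv hu2).const_add 1
    simp only [Nat.cast_ofNat, pow_one] at this
    rw [show (fun v : ℝ => 1 + 1/v^2) = fun x => 1 + (fun x => x ^ 2)⁻¹ x by funext v; simp [one_div]]
    exact this.congr_deriv (by norm_num)
  have hlog : HasDerivAt (fun v : ℝ => Real.log (1 + 1/v^2))
      ((-(2*u)/(u^2)^2) / (1 + 1/u^2)) u := h1.log (ne_of_gt harg)
  have hmul : HasDerivAt (fun v : ℝ => v * Real.log (1 + 1/v^2))
      (1 * Real.log (1 + 1/u^2) + u * ((-(2*u)/(u^2)^2) / (1 + 1/u^2))) u :=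
    (hasDerivAt_id u).mul hlog
  have harct : HasDerivAt (fun v : ℝ => 2 * Real.arctan v) (2 * (1/(1+u^2))) u :=
    (Real.hasDerivAt_arctan u).const_mul 2
  have := hmul.add harct
  refine this.congr_deriv ?_
  have hne : (1:ℝ) + u^2 ≠ 0 := by positivity
  field_simp
  ring

lemma Ffn_tendsto : Tendsto Ffn atTop (𝓝 Real.pi) := by
  have hA : Tendsto (fun u : ℝ => u * Real.log (1 + 1/u^2)) atTop (𝓝 0) := by
    apply squeeze_zero' (f := fun u : ℝ => u * Real.log (1 + 1/u^2)) (t₀ := atTop)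
      (g := fun u : ℝ => 1/u)
    · filter_upwards [eventually_gt_atTop (0:ℝ)] with u hu
      exact mul_nonneg hu.le (Real.log_nonneg (le_add_of_nonneg_right (by positivity)))
    · filter_upwards [eventually_gt_atTop (0:ℝ)] with u hu
      have h1 : Real.log (1 + 1/u^2) ≤ 1/u^2 := by
        have := Real.log_le_sub_one_of_pos (x := 1 + 1/u^2) (by positivity)
        linarith
      calc u * Real.log (1 + 1/u^2) ≤ u * (1/u^2) :=
            mul_le_mul_of_nonneg_left h1 hu.le
        _ = 1/u := by field_simp
    · simpa using tendsto_inv_atTop_zero.congr (fun u => (one_div u).symm)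
  have hB : Tendsto (fun u : ℝ => 2 * Real.arctan u) atTop (𝓝 Real.pi) := by
    have := (tendsto_nhds_of_tendsto_nhdsWithin Real.tendsto_arctan_atTop).const_mul (2:ℝ)
    convert this using 2
    ring
  have h := hA.add hB
  rw [zero_add] at h
  exact h

lemma Ffn_cont_at (s : ℝ) (hs : 0 ≤ s) : ContinuousWithinAt Ffn (Ici s) s := by
  rcases hs.lt_or_eq with h | h
  · exact (Ffn_deriv h).continuousAt.continuousWithinAt
  subst h
  have hF0 : Ffn 0 = 0 := by simp [Ffn]
  rw [ContinuousWithinAt, hF0]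
  have hA : Tendsto (fun u : ℝ => u * Real.log (1 + 1/u^2)) (nhdsWithin 0 (Ici 0)) (𝓝 0) := by
    have hmem : Ico (0:ℝ) 1 ∈ nhdsWithin (0:ℝ) (Ici 0) :=
      Ico_mem_nhdsGE zero_lt_one
    apply squeeze_zero' (f := fun u : ℝ => u * Real.log (1 + 1/u^2))
      (g := fun u : ℝ => u * Real.log 2 - 2 * (Real.log u * u))
    · filter_upwards [hmem] with u hu
      exact mul_nonneg hu.1 (Real.log_nonneg (le_add_of_nonneg_right (by positivity)))
    · filter_upwards [hmem] with u hu
      rcases hu.1.lt_or_eq with h0 | h0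
      · have hub : Real.log (1 + 1/u^2) ≤ Real.log 2 - 2 * Real.log u := by
          have h1 : (1:ℝ) + 1/u^2 ≤ 2/u^2 := by
            have hu2 : u^2 ≤ 1 := by nlinarith [hu.2]
            have hx : (1:ℝ) ≤ 1/u^2 := by
              rw [le_div_iff₀ (by positivity)]; linarith
            have e : (2:ℝ)/u^2 = 1/u^2 + 1/u^2 := by ring
            linarith
          calc Real.log (1 + 1/u^2) ≤ Real.log (2/u^2) :=
                Real.log_le_log (by positivity) h1
            _ = Real.log 2 - 2 * Real.log u := by
                rw [Real.log_div (by norm_num) (by positivity), Real.log_pow]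
                push_cast; ring
        calc u * Real.log (1 + 1/u^2) ≤ u * (Real.log 2 - 2 * Real.log u) :=
              mul_le_mul_of_nonneg_left hub h0.le
          _ = u * Real.log 2 - 2 * (Real.log u * u) := by ring
      · simp [← h0]
    · have hlog : Tendsto (fun u : ℝ => Real.log u * u) (nhdsWithin 0 (Ici 0)) (𝓝 0) := by
        have h1 : Tendsto (fun u : ℝ => Real.log u * u) (nhdsWithin 0 (Ioi 0)) (𝓝 0) := by
          have := tendsto_log_mul_rpow_nhdsGT_zero (r := 1) zero_lt_one
          simpa [Real.rpow_one] using this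
        have h2 : Tendsto (fun u : ℝ => Real.log u * u) (nhdsWithin 0 {(0:ℝ)}) (𝓝 0) := by
          rw [nhdsWithin_singleton]
          rw [tendsto_pure_left]
          intro s hs
          simpa using mem_of_mem_nhds hs
        have : Ici (0:ℝ) = {(0:ℝ)} ∪ Ioi 0 := by
          ext x
          simp only [mem_Ici, mem_union, mem_singleton_iff, mem_Ioi]
          exact ⟨fun h => h.eq_or_lt.imp Eq.symm id,
            fun h => h.elim (fun e => e.ge) le_of_lt⟩
        rw [this, nhdsWithin_union]
        exact tendsto_sup.2 ⟨h2, h1⟩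
      have hc : Tendsto (fun u : ℝ => u * Real.log 2) (nhdsWithin 0 (Ici 0)) (𝓝 0) := by
        have h := ((continuous_id.mul (continuous_const (y := Real.log 2))).tendsto
          (0:ℝ)).mono_left (nhdsWithin_le_nhds (s := Ici (0:ℝ)))
        simpa [Pi.mul_def] using h
      have := hc.sub (hlog.const_mul 2)
      simpa using this
  have hB : Tendsto (fun u : ℝ => 2 * Real.arctan u) (nhdsWithin 0 (Ici 0)) (𝓝 0) := by
    have := (Real.continuous_arctan.tendsto 0).const_mul (2:ℝ)
    simp only [Real.arctan_zero, mul_zero] at this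
    exact this.mono_left nhdsWithin_le_nhds
  have h := hA.add hB
  rw [add_zero] at h
  exact h

lemma log_integrable_on {s : ℝ} (hs : 0 ≤ s) :
    IntegrableOn (fun u : ℝ => Real.log (1 + 1/u^2)) (Ioi s) := by
  apply integrableOn_Ioi_deriv_of_nonneg (Ffn_cont_at s hs)
    (fun x hx => Ffn_deriv (lt_of_le_of_lt hs hx))
    (fun x hx => Real.log_nonneg (le_add_of_nonneg_right (by positivity)))
    Ffn_tendsto

lemma log_integral_le {s : ℝ} (hs : 0 ≤ s) :
    ∫ u in Ioi s, Real.log (1 + 1/u^2) ≤ Real.pi := by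
  rw [integral_Ioi_of_hasDerivAt_of_nonneg (Ffn_cont_at s hs)
    (fun x hx => Ffn_deriv (lt_of_le_of_lt hs hx))
    (fun x hx => Real.log_nonneg (le_add_of_nonneg_right (by positivity)))
    Ffn_tendsto]
  have hF : 0 ≤ Ffn s := by
    have h1 : 0 ≤ Real.arctan s := by
      have := Real.arctan_strictMono.monotone hs
      simpa [Real.arctan_zero] using this
    have h2 : 0 ≤ s * Real.log (1 + 1/s^2) :=
      mul_nonneg hs (Real.log_nonneg (le_add_of_nonneg_right (by positivity)))
    simp only [Ffn]; linarith
  linarith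

end BernAux

end Aux

/-- for a nondegenerate Bernstein function,
`φ(bu) ≤ |φ(bu + ib)| ≤ √(1 + 1/u²) φ(bu)` and `0 ≤ Θ_φ(a,b) ≤ π/2`. -/
theorem bernstein_Theta_bounds
    (φC : ℂ → ℂ) (m σ2 : ℝ) (μ : Measure ℝ)
    (hm : 0 ≤ m) (hσ : 0 ≤ σ2)
    (hμ0 : μ (Set.Iic 0) = 0)
    (hμint : Integrable (fun y : ℝ => min 1 y) μ)
    (hrepC : ∀ z : ℂ, 0 ≤ z.re →
      φC z = (m : ℂ) + (σ2 : ℂ) * z + ∫ y, (1 - Complex.exp (-(z * (y : ℂ)))) ∂μ)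
    (hnd : ¬ (m = 0 ∧ σ2 = 0 ∧ μ = 0)) :
    (∀ b u : ℝ, 0 < b → 0 < u →
        (φC ((b * u : ℝ) : ℂ)).re ≤ ‖φC (((b * u : ℝ) : ℂ) + (b : ℂ) * Complex.I)‖
      ∧ ‖φC (((b * u : ℝ) : ℂ) + (b : ℂ) * Complex.I)‖
          ≤ Real.sqrt (1 + 1 / u ^ 2) * (φC ((b * u : ℝ) : ℂ)).re)
    ∧ (∀ a b : ℝ, 0 ≤ a → 0 < b →
        0 ≤ Theta φC a b ∧ Theta φC a b ≤ Real.pi / 2) := by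
  have part1 : ∀ b u : ℝ, 0 < b → 0 < u →
      (φC ((b * u : ℝ) : ℂ)).re ≤ ‖φC (((b * u : ℝ) : ℂ) + (b : ℂ) * Complex.I)‖
      ∧ ‖φC (((b * u : ℝ) : ℂ) + (b : ℂ) * Complex.I)‖
          ≤ Real.sqrt (1 + 1 / u ^ 2) * (φC ((b * u : ℝ) : ℂ)).re := by
    intro b u hb hu
    have hx : (0:ℝ) < b * u := by positivity
    set z : ℂ := ((b * u : ℝ) : ℂ) + (b : ℂ) * Complex.I with hzdef
    have hzre : z.re = b * u := by simp [hzdef]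
    have hzim : z.im = b := by simp [hzdef]
    have hz : 0 < z.re := by rw [hzre]; exact hx
    have hlow := BernAux.bern_lower φC m σ2 μ hm hσ hμ0 hμint hrepC hz
    rw [hzre] at hlow
    have hup := BernAux.bern_upper φC m σ2 μ hm hσ hμ0 hμint hrepC hz
    rw [hzre] at hup
    have hnorm : ‖z‖ = Real.sqrt (1 + 1/u^2) * (b*u) := by
      have h1 : ‖z‖ = Real.sqrt ((b*u)^2 + b^2) := by
        rw [Complex.norm_def, Complex.normSq_apply, hzre, hzim]
        ring_nf
      rw [h1, show (b*u)^2 + b^2 = (1 + 1/u^2) * (b*u)^2 by field_simp]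
      rw [Real.sqrt_mul (by positivity), Real.sqrt_sq hx.le]
    refine ⟨hlow, hup.trans (le_of_eq ?_)⟩
    rw [hnorm, mul_div_assoc, div_self (ne_of_gt hx), mul_one]
  refine ⟨part1, ?_⟩
  intro a b ha hb
  have hs : 0 ≤ a / b := div_nonneg ha hb.le
  have hpos : ∀ u : ℝ, u ∈ Set.Ioi (a / b) →
      0 ≤ Real.log (‖φC (((b * u : ℝ) : ℂ) + (b : ℂ) * Complex.I)‖
            / (φC ((b * u : ℝ) : ℂ)).re)
      ∧ Real.log (‖φC (((b * u : ℝ) : ℂ) + (b : ℂ) * Complex.I)‖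
            / (φC ((b * u : ℝ) : ℂ)).re) ≤ 1/2 * Real.log (1 + 1/u^2) := by
    intro u hu
    have hu0 : 0 < u := lt_of_le_of_lt hs hu
    have hden : 0 < (φC ((b * u : ℝ) : ℂ)).re :=
      BernAux.re_pos φC m σ2 μ hm hσ hμ0 hμint hrepC hnd (by positivity)
    obtain ⟨h1, h2⟩ := part1 b u hb hu0
    have hr1 : 1 ≤ ‖φC (((b * u : ℝ) : ℂ) + (b : ℂ) * Complex.I)‖
        / (φC ((b * u : ℝ) : ℂ)).re := (one_le_div hden).2 h1
    refine ⟨Real.log_nonneg hr1, ?_⟩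
    have hr2 : ‖φC (((b * u : ℝ) : ℂ) + (b : ℂ) * Complex.I)‖
        / (φC ((b * u : ℝ) : ℂ)).re ≤ Real.sqrt (1 + 1/u^2) := by
      rw [div_le_iff₀ hden]
      simpa using h2
    calc Real.log (‖φC (((b * u : ℝ) : ℂ) + (b : ℂ) * Complex.I)‖
            / (φC ((b * u : ℝ) : ℂ)).re)
        ≤ Real.log (Real.sqrt (1 + 1/u^2)) :=
          Real.log_le_log (lt_of_lt_of_le zero_lt_one hr1) hr2
      _ = 1/2 * Real.log (1 + 1/u^2) := by
          rw [Real.log_sqrt (by positivity)]; ring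
  constructor
  · apply setIntegral_nonneg measurableSet_Ioi
    intro u hu
    exact (hpos u hu).1
  · have hint : IntegrableOn (fun u : ℝ => 1/2 * Real.log (1 + 1/u^2)) (Set.Ioi (a/b)) :=
      (BernAux.log_integrable_on hs).const_mul _
    have hle : Theta φC a b ≤ ∫ u in Set.Ioi (a/b), 1/2 * Real.log (1 + 1/u^2) := by
      apply integral_mono_of_nonneg
      · apply (ae_restrict_iff' measurableSet_Ioi).2
        exact .of_forall fun u hu => (hpos u hu).1
      · exact hint
      · apply (ae_restrict_iff' measurableSet_Ioi).2
        exact .of_forall fun u hu => (hpos u hu).2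
    have hval : ∫ u in Set.Ioi (a/b), 1/2 * Real.log (1 + 1/u^2) ≤ Real.pi / 2 := by
      rw [integral_const_mul]
      linarith [BernAux.log_integral_le hs]
    linarith
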